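/- Let ⪰ be a binary relation on a closed, mixture-closed set C of Anscombe–Aumann acts satisfying extended mixture cancellation and having closed graph. Then every complete binary relation ⪰' on C that extends ⪰, satisfies extended mixture cancellation, and has closed graph is of one of the following two forms: either a ⪰' b holds for all a, b ∈ C (the trivial relation), or there exists a vector w ∈ ℝ^{S×O} with w·d ≥ 0 for every d ∈ {a − b : a ⪰ b} such that for all a, b ∈ C, a ⪰' b iff w·(a − b) ≥ 0. -/

import Mathlib

/-- An Anscombe–Aumann act: a map assigning to each state a probability vector over outcomes. -/
def IsAAAct {S O : Type*} [Fintype O] (a : S → O → ℝ) : Prop :=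
  ∀ s, (∀ o, 0 ≤ a s o) ∧ (∑ o, a s o = 1)

/-- Extended mixture cancellation for a relation on a subset of a real vector space. -/
def ExtMixCancel {V : Type*} [AddCommGroup V] [Module ℝ V]
    (C : Set V) (R : V → V → Prop) : Prop :=
  ∀ (n : ℕ) (a b : Fin (n + 1) → V),
    (∀ i, a i ∈ C) → (∀ i, b i ∈ C) →
    (∑ i, a i = ∑ i, b i) →
    (∃ k, k ≤ n ∧ (∀ i : Fin (n + 1), (i : ℕ) < k → R (a i) (b i)) ∧
      (∀ i : Fin (n + 1), k ≤ (i : ℕ) → a i = a (Fin.last n) ∧ b i = b (Fin.last n))) →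
    R (b (Fin.last n)) (a (Fin.last n))

/-- The graph `{(a, b) ∈ C × C : a ⪰ b}` is closed. -/
def ClosedGraphOn {V : Type*} [TopologicalSpace V] (C : Set V) (R : V → V → Prop) : Prop :=
  IsClosed {p : V × V | p.1 ∈ C ∧ p.2 ∈ C ∧ R p.1 p.2}

/-- `D⁺ = {a - b : a, b ∈ C and a ⪰ b}`. -/
def Dplus {V : Type*} [AddCommGroup V] (C : Set V) (R : V → V → Prop) : Set V :=
  {x | ∃ a ∈ C, ∃ b ∈ C, R a b ∧ x = a - b}

/-- The standard inner product on `ℝ^{S×O}`. -/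
def dotSO {S O : Type*} [Fintype S] [Fintype O] (w x : S → O → ℝ) : ℝ :=
  ∑ s, ∑ o, w s o * x s o

open Filter Topology Pointwise

section AuxAlg
variable {V : Type*} [AddCommGroup V] [Module ℝ V] {C : Set V} {R : V → V → Prop}

lemma stepA (hc : ExtMixCancel C R) {x y : V} (hx : x ∈ C) (hy : y ∈ C)
    (k m : ℕ) (hm : 0 < m) (d : Fin k → V) (hd : ∀ i, d i ∈ Dplus C R)
    (hsum : (m : ℝ) • (x - y) = ∑ i, d i) : R x y := by
  obtain ⟨m, rfl⟩ := Nat.exists_eq_succ_of_ne_zero hm.ne'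
  choose p hp q hq hR hdiff using hd
  set a : Fin (k + (m + 1)) → V := Fin.append p (fun _ => y) with ha
  set b : Fin (k + (m + 1)) → V := Fin.append q (fun _ => x) with hb
  have hay : ∀ i : Fin (k + (m + 1)), k ≤ (i : ℕ) → a i = y ∧ b i = x := by
    intro i hi
    have e : i = Fin.natAdd k ⟨(i : ℕ) - k, by have := i.isLt; omega⟩ := by
      apply Fin.ext; simp only [Fin.natAdd]; omega
    rw [e]
    exact ⟨Fin.append_right _ _ _, Fin.append_right _ _ _⟩
  have hlast : k ≤ ((Fin.last (k + m) : Fin (k + m + 1)) : ℕ) := by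
    simp [Fin.last]
  have hval : ∀ i : Fin (k + (m + 1)), (hik : (i : ℕ) < k) →
      a i = p ⟨(i : ℕ), hik⟩ ∧ b i = q ⟨(i : ℕ), hik⟩ := by
    rintro ⟨iv, hlt⟩ hik
    exact ⟨Fin.append_left _ _ (⟨iv, hik⟩ : Fin k), Fin.append_left _ _ (⟨iv, hik⟩ : Fin k)⟩
  have hmemA : ∀ i : Fin (k + (m + 1)), a i ∈ C := by
    intro i
    by_cases h : (i : ℕ) < k
    · rw [(hval i h).1]; exact hp _
    · rw [(hay i (le_of_not_gt h)).1]; exact hy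
  have hmemB : ∀ i : Fin (k + (m + 1)), b i ∈ C := by
    intro i
    by_cases h : (i : ℕ) < k
    · rw [(hval i h).2]; exact hq _
    · rw [(hay i (le_of_not_gt h)).2]; exact hx
  have hsa : (∑ i : Fin (k + (m + 1)), a i) = (∑ i, p i) + (m + 1) • y := by
    rw [Fin.sum_univ_add]
    simp [ha, Finset.sum_const]
  have hsb : (∑ i : Fin (k + (m + 1)), b i) = (∑ i, q i) + (m + 1) • x := by
    rw [Fin.sum_univ_add]
    simp [hb, Finset.sum_const]
  have hsum' : ((m : ℝ) + 1) • (x - y) = (∑ i, p i) - ∑ i, q i := by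
    rw [Finset.sum_congr rfl (fun i _ => hdiff i), Finset.sum_sub_distrib] at hsum
    push_cast at hsum
    exact hsum
  have key := hc (k + m) a b hmemA hmemB ?_ ?_
  · obtain ⟨h1, h2⟩ := hay (Fin.last (k + m)) hlast
    rwa [h1, h2] at key
  · show (∑ i : Fin (k + (m + 1)), a i) = ∑ i : Fin (k + (m + 1)), b i
    rw [hsa, hsb, ← Nat.cast_smul_eq_nsmul ℝ (m + 1) y, ← Nat.cast_smul_eq_nsmul ℝ (m + 1) x]
    push_cast
    linear_combination (norm := module) -hsum'
  · refine ⟨k, Nat.le_add_right k m, fun i hik => ?_, fun i hki => ?_⟩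
    · rw [(hval i hik).1, (hval i hik).2]; exact hR _
    · obtain ⟨h1, h2⟩ := hay i hki
      obtain ⟨h3, h4⟩ := hay (Fin.last (k + m)) hlast
      rw [h1, h2, h3, h4]; exact ⟨rfl, rfl⟩

lemma Rrefl (hc : ExtMixCancel C R) {x : V} (hx : x ∈ C) : R x x :=
  stepA hc hx hx 0 1 one_pos (fun i => i.elim0) (fun i => i.elim0) (by simp)

lemma ofD (hc : ExtMixCancel C R) {x y : V} (hx : x ∈ C) (hy : y ∈ C)
    (h : x - y ∈ Dplus C R) : R x y :=
  stepA hc hx hy 1 1 one_pos (fun _ => x - y) (fun _ => h) (by simp)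

lemma ratScaleNat (hc : ExtMixCancel C R) {x y : V} (hx : x ∈ C) (hy : y ∈ C)
    {d : V} (hd : d ∈ Dplus C R) (P Q : ℕ) (hQ : 0 < Q)
    (h : (Q : ℝ) • (x - y) = (P : ℝ) • d) : R x y := by
  cases P with
  | zero =>
    have h0 : x - y = 0 := by
      have := h
      simp only [Nat.cast_zero, zero_smul] at this
      have hQ' : (Q : ℝ) ≠ 0 := by positivity
      exact (smul_eq_zero.mp this).resolve_left hQ'
    have : x = y := by rwa [sub_eq_zero] at h0
    rw [this]; exact Rrefl hc hy
  | succ P =>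
    refine stepA hc hx hy (P + 1) Q hQ (fun _ => d) (fun _ => hd) ?_
    rw [h]
    simp only [Finset.sum_const, Finset.card_univ, Fintype.card_fin]
    rw [← Nat.cast_smul_eq_nsmul ℝ (P + 1) d]

lemma ratScale (hc : ExtMixCancel C R) {x y : V} (hx : x ∈ C) (hy : y ∈ C)
    {d : V} (hd : d ∈ Dplus C R) (t : ℚ) (ht : 0 < t)
    (h : x - y = (t : ℝ) • d) : R x y := by
  refine ratScaleNat hc hx hy hd t.num.toNat t.den t.pos ?_
  rw [h, smul_smul]
  congr 1
  rw [Rat.cast_def]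
  have hden : ((t.den : ℝ)) ≠ 0 := by positivity
  have hnum : 0 < t.num := Rat.num_pos.mpr ht
  field_simp
  norm_cast
  omega

end AuxAlg

section AuxTop
variable {V : Type*} [AddCommGroup V] [Module ℝ V] [TopologicalSpace V]
  {C : Set V} {R : V → V → Prop}

omit [AddCommGroup V] [Module ℝ V] in
lemma limitR (hgraph : ClosedGraphOn C R) {x y : ℕ → V} {x' y' : V}
    (hx : Tendsto x atTop (𝓝 x')) (hy : Tendsto y atTop (𝓝 y'))
    (h : ∀ j, x j ∈ C ∧ y j ∈ C ∧ R (x j) (y j)) : R x' y' := by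
  have : (x', y') ∈ {p : V × V | p.1 ∈ C ∧ p.2 ∈ C ∧ R p.1 p.2} :=
    hgraph.mem_of_tendsto (hx.prodMk_nhds hy) (Eventually.of_forall fun j => h j)
  exact this.2.2

end AuxTop

/-- rationals approximating `t` from below, staying positive -/
lemma ratApprox {t : ℝ} (ht : 0 < t) :
    ∃ u : ℕ → ℚ, (∀ j, 0 < u j) ∧ (∀ j, (u j : ℝ) < t) ∧
      Tendsto (fun j => (u j : ℝ)) atTop (𝓝 t) := by
  have hlt : ∀ j : ℕ, max (t - 1 / (j + 1)) (t / 2) < t := by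
    intro j
    refine max_lt ?_ (by linarith)
    have : (0 : ℝ) < 1 / (j + 1) := by positivity
    linarith
  choose u hu1 hu2 using fun j => exists_rat_btwn (hlt j)
  refine ⟨u, fun j => ?_, hu2, ?_⟩
  · have : (t / 2 : ℝ) < u j := lt_of_le_of_lt (le_max_right _ _) (hu1 j)
    have h2 : (0:ℝ) < u j := lt_of_lt_of_le (by linarith) this.le
    exact_mod_cast h2
  · refine tendsto_of_tendsto_of_tendsto_of_le_of_le
      (g := fun j : ℕ => t - 1 / (j + 1)) (h := fun _ => t) ?_ tendsto_const_nhds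
      (fun j => (le_of_lt ((le_max_left _ _).trans_lt (hu1 j)))) (fun j => (hu2 j).le)
    have := tendsto_one_div_add_atTop_nhds_zero_nat (𝕜 := ℝ)
    simpa using tendsto_const_nhds.sub this

section AuxTVS
variable {V : Type*} [AddCommGroup V] [Module ℝ V] [TopologicalSpace V]
  [IsTopologicalAddGroup V] [ContinuousSMul ℝ V]
  {C : Set V} {R : V → V → Prop}

theorem realScale (hc : ExtMixCancel C R) (hgraph : ClosedGraphOn C R)
    (hmix : ∀ a ∈ C, ∀ b ∈ C, ∀ r : ℝ, 0 ≤ r → r ≤ 1 → r • a + (1 - r) • b ∈ C)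
    {x y d : V} (hx : x ∈ C) (hy : y ∈ C) (hd : d ∈ Dplus C R)
    {t : ℝ} (ht : 0 < t) (h : x - y = t • d) : R x y := by
  obtain ⟨u, hu0, hut, hulim⟩ := ratApprox ht
  set r : ℕ → ℝ := fun j => (u j : ℝ) / t with hr
  have hr0 : ∀ j, 0 ≤ r j := fun j => by
    have h1 : (0:ℝ) < u j := by exact_mod_cast hu0 j
    positivity
  have hr1 : ∀ j, r j ≤ 1 := fun j => by
    rw [hr]
    exact (div_le_one ht).mpr (hut j).le
  set xj : ℕ → V := fun j => r j • x + (1 - r j) • y with hxj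
  have hxjC : ∀ j, xj j ∈ C := fun j => hmix x hx y hy (r j) (hr0 j) (hr1 j)
  have hRj : ∀ j, R (xj j) y := by
    intro j
    refine ratScale hc (hxjC j) hy hd (u j) (hu0 j) ?_
    have e : xj j - y = r j • (x - y) := by rw [hxj]; module
    rw [e, h, smul_smul, hr, div_mul_cancel₀ _ ht.ne']
  have hrlim : Tendsto r atTop (𝓝 1) := by
    rw [show (1:ℝ) = t / t from (div_self ht.ne').symm]
    exact hulim.div tendsto_const_nhds ht.ne'
  have hxlim : Tendsto xj atTop (𝓝 x) := by
    have h1 : Tendsto (fun j => r j • x) atTop (𝓝 ((1:ℝ) • x)) := hrlim.smul_const x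
    have h2 : Tendsto (fun j => (1 - r j) • y) atTop (𝓝 ((1 - 1 : ℝ) • y)) :=
      (tendsto_const_nhds.sub hrlim).smul_const y
    have := h1.add h2
    simpa using this
  exact limitR hgraph hxlim tendsto_const_nhds (fun j => ⟨hxjC j, hy, hRj j⟩)

omit [TopologicalSpace V] [IsTopologicalAddGroup V] [ContinuousSMul ℝ V] in
theorem ratCombo (hc : ExtMixCancel C R)
    {a1 b1 a2 b2 : V} (ha1 : a1 ∈ C) (hb1 : b1 ∈ C) (ha2 : a2 ∈ C) (hb2 : b2 ∈ C)
    (hR1 : R a1 b1) (hR2 : R a2 b2)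
    (hmix : ∀ a ∈ C, ∀ b ∈ C, ∀ r : ℝ, 0 ≤ r → r ≤ 1 → r • a + (1 - r) • b ∈ C)
    (q : ℚ) (hq0 : 0 ≤ q) (hq1 : q ≤ 1) :
    R ((q : ℝ) • a1 + (1 - (q : ℝ)) • a2) ((q : ℝ) • b1 + (1 - (q : ℝ)) • b2) := by
  have hq0' : (0:ℝ) ≤ (q:ℝ) := by exact_mod_cast hq0
  have hq1' : (q:ℝ) ≤ 1 := by exact_mod_cast hq1
  have hxC : (q : ℝ) • a1 + (1 - (q : ℝ)) • a2 ∈ C := hmix a1 ha1 a2 ha2 _ hq0' hq1'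
  have hyC : (q : ℝ) • b1 + (1 - (q : ℝ)) • b2 ∈ C := hmix b1 hb1 b2 hb2 _ hq0' hq1'
  set P := q.num.toNat with hP
  set Dn := q.den with hDn
  have hPD : P ≤ Dn := by
    have h1 : q.num ≤ (q.den : ℤ) := by
      rcases eq_or_lt_of_le hq1 with h | h
      · subst h; norm_num
      · exact (Rat.lt_one_iff_num_lt_denom.mpr h).le
    omega
  have hd1 : a1 - b1 ∈ Dplus C R := ⟨a1, ha1, b1, hb1, hR1, rfl⟩
  have hd2 : a2 - b2 ∈ Dplus C R := ⟨a2, ha2, b2, hb2, hR2, rfl⟩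
  have hmemd : ∀ i : Fin Dn, (if (i : ℕ) < P then a1 - b1 else a2 - b2) ∈ Dplus C R := by
    intro i
    by_cases h : (i : ℕ) < P
    · rw [if_pos h]; exact hd1
    · rw [if_neg h]; exact hd2
  refine stepA hc hxC hyC Dn Dn q.pos (fun i => if (i : ℕ) < P then a1 - b1 else a2 - b2)
    hmemd ?_
  have hsplit : (∑ i : Fin Dn, if (i : ℕ) < P then a1 - b1 else a2 - b2)
      = P • (a1 - b1) + (Dn - P) • (a2 - b2) := by
    rw [Fin.sum_univ_eq_sum_range (fun j => if j < P then a1 - b1 else a2 - b2) Dn]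
    rw [Finset.range_eq_Ico, ← Finset.sum_Ico_consecutive _ (Nat.zero_le P) hPD]
    rw [Finset.sum_congr rfl (fun j hj => if_pos (Finset.mem_Ico.mp hj).2),
        Finset.sum_congr rfl (fun j hj => if_neg (by
          have := (Finset.mem_Ico.mp hj).1; omega))]
    simp [Nat.card_Ico, smul_sub]
  rw [hsplit, ← Nat.cast_smul_eq_nsmul ℝ P, ← Nat.cast_smul_eq_nsmul ℝ (Dn - P)]
  have hPcast : (P : ℝ) = (q : ℝ) * Dn := by
    rw [hP, hDn, Rat.cast_def]
    have : ((q.den : ℝ)) ≠ 0 := by positivity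
    field_simp
    norm_cast
    have hnum : 0 ≤ q.num := Rat.num_nonneg.mpr hq0
    omega
  have hDPcast : ((Dn - P : ℕ) : ℝ) = (1 - (q : ℝ)) * Dn := by
    have : ((Dn - P : ℕ) : ℝ) = (Dn : ℝ) - P := by
      push_cast [hPD]
      ring
    rw [this, hPcast]
    ring
  rw [hPcast, hDPcast]
  match_scalars <;> ring

theorem Dconvex (hc : ExtMixCancel C R) (hgraph : ClosedGraphOn C R)
    (hmix : ∀ a ∈ C, ∀ b ∈ C, ∀ r : ℝ, 0 ≤ r → r ≤ 1 → r • a + (1 - r) • b ∈ C) :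
    Convex ℝ (Dplus C R) := by
  rintro z1 hz1 z2 hz2 α β hα hβ hab
  obtain ⟨a1, ha1, b1, hb1, hR1, rfl⟩ := hz1
  obtain ⟨a2, ha2, b2, hb2, hR2, rfl⟩ := hz2
  have hβ1 : β = 1 - α := by linarith
  subst hβ1
  have hα1 : α ≤ 1 := by linarith
  set xα := α • a1 + (1 - α) • a2 with hxα
  set yα := α • b1 + (1 - α) • b2 with hyα
  have hxC : xα ∈ C := hmix _ ha1 _ ha2 α hα hα1
  have hyC : yα ∈ C := hmix _ hb1 _ hb2 α hα hα1
  have hR : R xα yα := by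
    rcases eq_or_lt_of_le hα with h0 | h0
    · have e1 : xα = a2 := by rw [hxα, ← h0]; simp
      have e2 : yα = b2 := by rw [hyα, ← h0]; simp
      rw [e1, e2]; exact hR2
    rcases eq_or_lt_of_le hα1 with h1 | h1
    · have e1 : xα = a1 := by rw [hxα, h1]; simp
      have e2 : yα = b1 := by rw [hyα, h1]; simp
      rw [e1, e2]; exact hR1
    · obtain ⟨u, hu0, hut, hulim⟩ := ratApprox h0
      have hu1 : ∀ j, u j ≤ 1 := by
        intro j
        have : (u j : ℝ) ≤ 1 := by linarith [hut j]
        exact_mod_cast this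
      set xj : ℕ → V := fun j => ((u j : ℝ)) • a1 + (1 - (u j : ℝ)) • a2 with hxjd
      set yj : ℕ → V := fun j => ((u j : ℝ)) • b1 + (1 - (u j : ℝ)) • b2 with hyjd
      have hRj : ∀ j, xj j ∈ C ∧ yj j ∈ C ∧ R (xj j) (yj j) := by
        intro j
        have hq0' : (0:ℝ) ≤ (u j : ℝ) := by exact_mod_cast (hu0 j).le
        have hq1' : ((u j : ℝ)) ≤ 1 := by exact_mod_cast hu1 j
        exact ⟨hmix _ ha1 _ ha2 _ hq0' hq1', hmix _ hb1 _ hb2 _ hq0' hq1',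
          ratCombo hc ha1 hb1 ha2 hb2 hR1 hR2 hmix (u j) (hu0 j).le (hu1 j)⟩
      have hxlim : Tendsto xj atTop (𝓝 xα) :=
        (hulim.smul_const a1).add ((tendsto_const_nhds.sub hulim).smul_const a2)
      have hylim : Tendsto yj atTop (𝓝 yα) :=
        (hulim.smul_const b1).add ((tendsto_const_nhds.sub hulim).smul_const b2)
      exact limitR hgraph hxlim hylim hRj
  exact ⟨xα, hxC, yα, hyC, hR, by rw [hxα, hyα]; module⟩

end AuxTVS

section AuxDot
variable {S O : Type*} [Fintype S] [Fintype O]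

lemma pi_decomp [DecidableEq S] [DecidableEq O] (x : S → O → ℝ) :
    ∑ s, ∑ o, x s o • (Pi.single s (Pi.single o (1:ℝ)) : S → O → ℝ) = x := by
  funext s' o'
  simp [Finset.sum_apply, Pi.single_apply, Finset.sum_ite_eq, Finset.sum_ite_eq', ite_apply]

lemma dot_of_linear [DecidableEq S] [DecidableEq O] (F : (S → O → ℝ) →ₗ[ℝ] ℝ) (x : S → O → ℝ) :
    dotSO (fun s o => F (Pi.single s (Pi.single o 1))) x = F x := by
  conv_rhs => rw [← pi_decomp x]
  rw [map_sum]
  unfold dotSO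
  refine Finset.sum_congr rfl fun s _ => ?_
  rw [map_sum]
  refine Finset.sum_congr rfl fun o _ => ?_
  rw [map_smul, smul_eq_mul, mul_comm]

end AuxDot

set_option maxHeartbeats 2000000 in
/-- Every complete extension of `⪰` satisfying extended mixture cancellation with
closed graph is either trivial or a half-space relation. -/
theorem complete_extension_trivial_or_halfspace
    {S O : Type*} [Fintype S] [Fintype O] [Nonempty S] [Nonempty O]
    (C : Set (S → O → ℝ)) (R R' : (S → O → ℝ) → (S → O → ℝ) → Prop)
    (hAA : ∀ a ∈ C, IsAAAct a)
    (hclosedC : IsClosed C)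
    (hmix : ∀ a ∈ C, ∀ b ∈ C, ∀ r : ℝ, 0 ≤ r → r ≤ 1 → r • a + (1 - r) • b ∈ C)
    (hcancel : ExtMixCancel C R)
    (hgraph : ClosedGraphOn C R)
    (hcomp' : ∀ a ∈ C, ∀ b ∈ C, R' a b ∨ R' b a)
    (hext : ∀ a ∈ C, ∀ b ∈ C, R a b → R' a b)
    (hcancel' : ExtMixCancel C R')
    (hgraph' : ClosedGraphOn C R') :
    (∀ a ∈ C, ∀ b ∈ C, R' a b) ∨
    (∃ w : S → O → ℝ, (∀ d ∈ Dplus C R, 0 ≤ dotSO w d) ∧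
      ∀ a ∈ C, ∀ b ∈ C, (R' a b ↔ 0 ≤ dotSO w (a - b))) := by
  classical
  by_cases htriv : ∀ a ∈ C, ∀ b ∈ C, R' a b
  · exact Or.inl htriv
  right
  push_neg at htriv
  obtain ⟨a₀, ha₀, b₀, hb₀, hnR₀⟩ := htriv
  set D' : Set (S → O → ℝ) := Dplus C R' with hD'
  set W : Set (S → O → ℝ) := C - C with hWdef
  have hCconv : Convex ℝ C := by
    intro x hx y hy a b ha hb hab
    have := hmix x hx y hy a ha (by linarith)
    rwa [show (1 : ℝ) - a = b by linarith] at this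
  have hWconv : Convex ℝ W := hCconv.sub hCconv
  have hCbd : Bornology.IsBounded C := by
    rw [isBounded_iff_forall_norm_le]
    refine ⟨1, fun a ha => ?_⟩
    rw [pi_norm_le_iff_of_nonneg (by norm_num)]
    intro s
    rw [pi_norm_le_iff_of_nonneg (by norm_num)]
    intro o
    have h1 := (hAA a ha s).1 o
    have h2 : a s o ≤ 1 := by
      calc a s o ≤ ∑ o', a s o' :=
            Finset.single_le_sum (fun o' _ => (hAA a ha s).1 o') (Finset.mem_univ o)
        _ = 1 := (hAA a ha s).2
    rw [Real.norm_eq_abs, abs_le]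
    constructor <;> linarith
  have hCcomp : IsCompact C := Metric.isCompact_of_isClosed_isBounded hclosedC hCbd
  have hGcomp : IsCompact {p : (S→O→ℝ) × (S→O→ℝ) | p.1 ∈ C ∧ p.2 ∈ C ∧ R' p.1 p.2} :=
    (hCcomp.prod hCcomp).of_isClosed_subset hgraph'
      (fun p hp => Set.mem_prod.mpr ⟨hp.1, hp.2.1⟩)
  have hD'eq : D' = (fun p : _ × _ => p.1 - p.2) ''
      {p : (S→O→ℝ) × (S→O→ℝ) | p.1 ∈ C ∧ p.2 ∈ C ∧ R' p.1 p.2} := by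
    ext z
    constructor
    · rintro ⟨a, ha, b, hb, hR, rfl⟩; exact ⟨(a, b), ⟨ha, hb, hR⟩, rfl⟩
    · rintro ⟨⟨a, b⟩, ⟨ha, hb, hR⟩, rfl⟩; exact ⟨a, ha, b, hb, hR, rfl⟩
  have hD'comp : IsCompact D' := by
    rw [hD'eq]; exact hGcomp.image (continuous_fst.sub continuous_snd)
  have hD'closed : IsClosed D' := hD'comp.isClosed
  have hD'conv : Convex ℝ D' := Dconvex hcancel' hgraph' hmix
  have h0D : (0 : S → O → ℝ) ∈ D' := ⟨a₀, ha₀, a₀, ha₀, Rrefl hcancel' ha₀, by simp⟩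
  have hD'W : D' ⊆ W := by rintro z ⟨a, ha, b, hb, _, rfl⟩; exact Set.sub_mem_sub ha hb
  set N : Set (S→O→ℝ) := W \ D' with hNdef
  have hscaleD : ∀ z ∈ W, ∀ (t : ℝ), 0 < t → ∀ d ∈ D', z = t • d → z ∈ D' := by
    intro z hz t ht d hd he
    obtain ⟨x, hx, y, hy, e⟩ := Set.mem_sub.mp hz
    exact ⟨x, hx, y, hy, realScale hcancel' hgraph' hmix hx hy hd ht (by rw [e, he]), e.symm⟩
  have hNconv : Convex ℝ N := by
    rintro z1 hz1 z2 hz2 α β hα hβ hab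
    have hzW : α • z1 + β • z2 ∈ W := hWconv hz1.1 hz2.1 hα hβ hab
    refine ⟨hzW, fun hzD => ?_⟩
    rcases eq_or_lt_of_le hα with h0 | h0
    · refine hz2.2 ?_
      have hb1 : β = 1 := by rw [← h0] at hab; linarith
      have e : α • z1 + β • z2 = z2 := by rw [← h0, hb1]; simp
      rwa [e] at hzD
    obtain ⟨x2, hx2, y2, hy2, he2⟩ := Set.mem_sub.mp hz2.1
    have hnR2 : ¬ R' x2 y2 := fun h => hz2.2 ⟨x2, hx2, y2, hy2, h, he2.symm⟩
    have hR2' : R' y2 x2 := (hcomp' x2 hx2 y2 hy2).resolve_left hnR2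
    have hmz2 : -z2 ∈ D' := ⟨y2, hy2, x2, hx2, hR2', by rw [← he2]; abel⟩
    refine hz1.2 ?_
    obtain ⟨x1, hx1, y1, hy1, he1⟩ := Set.mem_sub.mp hz1.1
    have hα0 : α ≠ 0 := ne_of_gt h0
    set c : ℝ := 1/α + β/α with hc
    have hba : 0 ≤ β / α := div_nonneg hβ h0.le
    have h1a : 0 < 1 / α := by positivity
    have hcpos : 0 < c := by
      rw [hc]; exact add_pos_of_pos_of_nonneg h1a hba
    have hc0 : c ≠ 0 := ne_of_gt hcpos
    set wv := ((1/α)/c) • (α • z1 + β • z2) + ((β/α)/c) • (-z2) with hwv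
    have hwvD : wv ∈ D' := by
      refine hD'conv hzD hmz2 (by positivity) (by positivity) ?_
      rw [← add_div, ← hc, div_self hc0]
    have he : x1 - y1 = c • wv := by
      rw [he1, hwv]
      match_scalars <;> field_simp <;> ring
    exact ⟨x1, hx1, y1, hy1,
      realScale hcancel' hgraph' hmix hx1 hy1 hwvD hcpos he, he1.symm⟩
  -- restrict to the span of W
  set pE : Submodule ℝ (S → O → ℝ) := Submodule.span ℝ W with hpE
  have hWsub : W ⊆ (pE : Set (S → O → ℝ)) := Submodule.subset_span
  set W₀ : Set pE := (pE.subtype) ⁻¹' W with hW₀def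
  set D₀ : Set pE := (pE.subtype) ⁻¹' D' with hD₀def
  set N₀ : Set pE := (pE.subtype) ⁻¹' N with hN₀def
  have hW₀conv : Convex ℝ W₀ := hWconv.linear_preimage pE.subtype
  have hD₀conv : Convex ℝ D₀ := hD'conv.linear_preimage pE.subtype
  have hN₀conv : Convex ℝ N₀ := hNconv.linear_preimage pE.subtype
  have hD₀closed : IsClosed D₀ := hD'closed.preimage continuous_subtype_val
  have h0W₀ : (0 : pE) ∈ W₀ := by
    show pE.subtype 0 ∈ W
    rw [map_zero]
    exact hD'W h0D
  have h0D₀ : (0 : pE) ∈ D₀ := by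
    show pE.subtype 0 ∈ D'
    rw [map_zero]
    exact h0D
  have himg : pE.subtype '' W₀ = W :=
    Set.image_preimage_eq_of_subset (fun x hx => ⟨⟨x, hWsub hx⟩, rfl⟩)
  have hspan : Submodule.span ℝ W₀ = (⊤ : Submodule ℝ pE) := by
    apply Submodule.map_injective_of_injective (Submodule.injective_subtype pE)
    rw [Submodule.map_span, himg, Submodule.map_subtype_top]
  have haff : affineSpan ℝ W₀ = ⊤ := by
    rw [AffineSubspace.affineSpan_eq_top_iff_vectorSpan_eq_top_of_nonempty ℝ pE pE
      ⟨0, h0W₀⟩, vectorSpan_def]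
    rw [eq_top_iff, ← hspan]
    apply Submodule.span_mono
    intro z hz
    exact ⟨z, hz, 0, h0W₀, by simp⟩
  have hintW : (interior W₀).Nonempty :=
    (hW₀conv.interior_nonempty_iff_affineSpan_eq_top).mpr haff
  have hWsymm : ∀ z : pE, z ∈ W₀ → -z ∈ W₀ := by
    intro z hz
    obtain ⟨x, hx, y, hy, e⟩ := Set.mem_sub.mp (show (z : S→O→ℝ) ∈ W from hz)
    show pE.subtype (-z) ∈ W
    rw [map_neg]
    show -(z : S→O→ℝ) ∈ W
    rw [← e, neg_sub]
    exact Set.sub_mem_sub hy hx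
  have h0int : (0 : pE) ∈ interior W₀ := by
    obtain ⟨z, hz⟩ := hintW
    have h2 := hW₀conv.combo_interior_self_mem_interior hz (hWsymm z (interior_subset hz))
      (a := (1:ℝ)/2) (b := (1:ℝ)/2) one_half_pos (by norm_num) (by norm_num)
    have e : ((1:ℝ)/2) • z + ((1:ℝ)/2) • (-z) = (0 : pE) := by module
    rwa [e] at h2
  set M : Set pE := interior W₀ \ D₀ with hMdef
  have hMopen : IsOpen M := isOpen_interior.sdiff hD₀closed
  have hMconv : Convex ℝ M := by
    have e : M = interior W₀ ∩ N₀ := by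
      ext z
      constructor
      · rintro ⟨h1, h2⟩
        have h1' : z ∈ W₀ := interior_subset h1
        exact ⟨h1, ⟨h1', h2⟩⟩
      · rintro ⟨h1, h2⟩
        exact ⟨h1, h2.2⟩
    rw [e]
    exact (hW₀conv.interior).inter hN₀conv
  set K : Set pE := {z | ∃ t : ℝ, 0 ≤ t ∧ ∃ d ∈ D₀, z = t • d} with hKdef
  have hKconv : Convex ℝ K := by
    rintro u ⟨t1, ht1, d1, hd1, rfl⟩ v ⟨t2, ht2, d2, hd2, rfl⟩ α β hα hβ hab
    by_cases hs : α * t1 + β * t2 = 0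
    · have h1 : α * t1 = 0 := by
        have g1 := mul_nonneg hα ht1
        have g2 := mul_nonneg hβ ht2
        linarith
      have h2 : β * t2 = 0 := by
        have g1 := mul_nonneg hα ht1
        have g2 := mul_nonneg hβ ht2
        linarith
      refine ⟨0, le_refl 0, d1, hd1, ?_⟩
      rw [smul_smul, smul_smul, h1, h2]
      simp
    · have hspos : 0 < α * t1 + β * t2 :=
        lt_of_le_of_ne (by positivity) (Ne.symm hs)
      refine ⟨α * t1 + β * t2, hspos.le,
        (α * t1 / (α * t1 + β * t2)) • d1 + (β * t2 / (α * t1 + β * t2)) • d2,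
        hD₀conv hd1 hd2 (by positivity) (by positivity) (by field_simp), ?_⟩
      match_scalars <;> field_simp
  have h0K : (0 : pE) ∈ K := ⟨0, le_refl 0, 0, h0D₀, by simp⟩
  have hdisj : Disjoint M K := by
    rw [Set.disjoint_left]
    rintro z ⟨hzint, hznD⟩ ⟨t, ht, d, hd, rfl⟩
    rcases eq_or_lt_of_le ht with h0 | h0
    · apply hznD
      rw [← h0]
      simpa using h0D₀
    · apply hznD
      have hzW₀ : t • d ∈ W₀ := interior_subset hzint
      show pE.subtype (t • d) ∈ D'
      rw [map_smul]
      exact hscaleD _ hzW₀ t h0 _ hd rfl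
  obtain ⟨f, u, hfM, hfK⟩ := geometric_hahn_banach_open hMconv hMopen hKconv hdisj
  have hu0 : u ≤ 0 := by
    have := hfK 0 h0K
    simpa using this
  have hfD₀ : ∀ d ∈ D₀, 0 ≤ f d := by
    intro d hd
    by_contra hneg
    push_neg at hneg
    have hmem : ((u - 1) / f d) • d ∈ K := by
      refine ⟨(u - 1) / f d, ?_, d, hd, rfl⟩
      rw [div_nonneg_iff]
      right
      exact ⟨by linarith, hneg.le⟩
    have := hfK _ hmem
    rw [map_smul, smul_eq_mul, div_mul_cancel₀ _ (ne_of_lt hneg)] at this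
    linarith
  have hfN : ∀ n ∈ N₀, f n < 0 := by
    intro n hn
    have hn1 : n ∈ W₀ := hn.1
    have hn2 : pE.subtype n ∉ D' := hn.2
    have hhalfint : ((1:ℝ)/2) • n ∈ interior W₀ := by
      have h2 := hW₀conv.combo_interior_self_mem_interior h0int hn1
        (a := (1:ℝ)/2) (b := (1:ℝ)/2) one_half_pos (by norm_num) (by norm_num)
      have e : ((1:ℝ)/2) • (0 : pE) + ((1:ℝ)/2) • n = ((1:ℝ)/2) • n := by module
      rwa [e] at h2
    have hhalfD : ((1:ℝ)/2) • n ∉ D₀ := by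
      intro hmem
      apply hn2
      refine hscaleD _ hn1 2 two_pos _ hmem ?_
      show (n : S→O→ℝ) = (2:ℝ) • (pE.subtype (((1:ℝ)/2) • n))
      rw [map_smul, smul_smul]
      norm_num
    have hlt := hfM _ ⟨hhalfint, hhalfD⟩
    have hlt2 : f (((1:ℝ)/2) • n) < 0 := lt_of_lt_of_le hlt hu0
    rw [map_smul, smul_eq_mul] at hlt2
    linarith
  obtain ⟨pQ, hQc⟩ := pE.exists_isCompl
  set F : (S → O → ℝ) →ₗ[ℝ] ℝ :=
    f.toLinearMap.comp (pE.projectionOnto pQ hQc) with hF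
  have hFval : ∀ z : pE, F (z : S → O → ℝ) = f z := by
    intro z
    rw [hF]
    simp [Submodule.projectionOnto_apply_left hQc z]
  set w : S → O → ℝ := fun s o => F (Pi.single s (Pi.single o 1)) with hw
  have hdot : ∀ x, dotSO w x = F x := fun x => dot_of_linear F x
  refine ⟨w, ?_, ?_⟩
  · rintro d ⟨a, ha, b, hb, hRab, rfl⟩
    have hdD : a - b ∈ D' := ⟨a, ha, b, hb, hext a ha b hb hRab, rfl⟩
    have hmemW : a - b ∈ W := Set.sub_mem_sub ha hb
    have h1 : F (a - b) = f (⟨a - b, hWsub hmemW⟩ : pE) := hFval ⟨a - b, hWsub hmemW⟩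
    rw [hdot, h1]
    exact hfD₀ _ (show pE.subtype (⟨a - b, hWsub hmemW⟩ : pE) ∈ D' from hdD)
  · intro a ha b hb
    have hmemW : a - b ∈ W := Set.sub_mem_sub ha hb
    have hv : dotSO w (a - b) = f (⟨a - b, hWsub hmemW⟩ : pE) := by
      have h1 : F (a - b) = f (⟨a - b, hWsub hmemW⟩ : pE) := hFval ⟨a - b, hWsub hmemW⟩
      rw [hdot, h1]
    constructor
    · intro hR'
      rw [hv]
      exact hfD₀ _ (show pE.subtype (⟨a - b, hWsub hmemW⟩ : pE) ∈ D' from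
        ⟨a, ha, b, hb, hR', rfl⟩)
    · intro hge
      by_contra hn
      have hzN : pE.subtype (⟨a - b, hWsub hmemW⟩ : pE) ∈ N :=
        ⟨hmemW, fun hmem => hn (ofD hcancel' ha hb hmem)⟩
      have := hfN _ hzN
      rw [hv] at hge
      linarith
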